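/- Let r > 2. Suppose (q_n) is a sequence of positive reals with q_n → 0, and for each n, u_n : ℝ → ℝ is a bounded, four times continuously differentiable function satisfying u_n'''' + q_n·u_n'' + |u_n|^{r−2}·u_n = 0 at every point of ℝ. Then sup_{x∈ℝ} |u_n(x)| → 0 as n → ∞. -/

import Mathlib

open Filter

open Set intervalIntegral


open Filter Set intervalIntegral

lemma abs_sub_le_of_mem_uIcc {a b s : ℝ} (hs : s ∈ Set.uIcc a b) : |b - s| ≤ |b - a| := by
  rcases le_total a b with h | h
  · rw [Set.uIcc_of_le h] at hs
    rw [abs_of_nonneg (by linarith [hs.2]), abs_of_nonneg (by linarith)]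
    linarith [hs.1]
  · rw [Set.uIcc_of_ge h] at hs
    rw [abs_of_nonpos (by linarith [hs.1]), abs_of_nonpos (by linarith)]
    linarith [hs.2]

lemma abs_sub_le_of_mem_uIcc' {a b s : ℝ} (hs : s ∈ Set.uIcc a b) : |s - a| ≤ |b - a| := by
  rcases le_total a b with h | h
  · rw [Set.uIcc_of_le h] at hs
    rw [abs_of_nonneg (by linarith [hs.1]), abs_of_nonneg (by linarith)]
    linarith [hs.2]
  · rw [Set.uIcc_of_ge h] at hs
    rw [abs_of_nonpos (by linarith [hs.2]), abs_of_nonpos (by linarith)]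
    linarith [hs.1]

lemma ftc_bound {f f' : ℝ → ℝ} (hd : ∀ x, HasDerivAt f (f' x) x) (hc : Continuous f')
    {C : ℝ} (a b : ℝ) (hC : ∀ s ∈ Set.uIcc a b, |f' s| ≤ C) : |f b - f a| ≤ C * |b - a| := by
  rw [← intervalIntegral.integral_eq_sub_of_hasDerivAt (fun x _ => hd x)
    (hc.intervalIntegrable a b)]
  have := intervalIntegral.norm_integral_le_of_norm_le_const
    (f := f') (a := a) (b := b) (C := C) (fun s hs => by
      rw [Real.norm_eq_abs]
      exact hC s (Set.uIoc_subset_uIcc hs))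
  rwa [Real.norm_eq_abs] at this

lemma taylor1_eq {f0 f1 f2 : ℝ → ℝ}
    (d0 : ∀ x, HasDerivAt f0 (f1 x) x) (d1 : ∀ x, HasDerivAt f1 (f2 x) x)
    (c2 : Continuous f2) (a b : ℝ) :
    f0 b = f0 a + (b - a) * f1 a + ∫ s in a..b, (b - s) * f2 s := by
  set g : ℝ → ℝ := fun t => f0 t + (b - t) * f1 t with hg
  have hgd : ∀ t, HasDerivAt g ((b - t) * f2 t) t := by
    intro t
    have t1 : HasDerivAt (fun y : ℝ => b - y) (-1) t := by
      simpa using (hasDerivAt_id t).const_sub b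
    have total := (d0 t).add (t1.mul (d1 t))
    exact total.congr_deriv (by ring)
  have hint : IntervalIntegrable (fun s => (b - s) * f2 s) MeasureTheory.volume a b :=
    ((continuous_const.sub continuous_id).mul c2).intervalIntegrable a b
  have := intervalIntegral.integral_eq_sub_of_hasDerivAt (fun t _ => hgd t) hint
  have hgb : g b = f0 b := by simp [hg]
  have hga : g a = f0 a + (b - a) * f1 a := by simp [hg]
  rw [this, hgb, hga]
  ring

lemma taylor1_bound {f0 f1 f2 : ℝ → ℝ}
    (d0 : ∀ x, HasDerivAt f0 (f1 x) x) (d1 : ∀ x, HasDerivAt f1 (f2 x) x)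
    (c2 : Continuous f2) {a b M h : ℝ} (hM0 : 0 ≤ M)
    (hM : ∀ s ∈ Set.uIcc a b, |f2 s| ≤ M) (hab : |b - a| ≤ h) :
    |f0 b - f0 a - (b - a) * f1 a| ≤ M * h ^ 2 := by
  have hh : 0 ≤ h := le_trans (abs_nonneg _) hab
  have heq := taylor1_eq d0 d1 c2 a b
  have hb : |∫ s in a..b, (b - s) * f2 s| ≤ M * h * |b - a| := by
    have := intervalIntegral.norm_integral_le_of_norm_le_const
      (f := fun s => (b - s) * f2 s) (a := a) (b := b) (C := M * h) (fun s hs => by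
        rw [Real.norm_eq_abs, abs_mul]
        have h1 : |b - s| ≤ h := le_trans (abs_sub_le_of_mem_uIcc (Set.uIoc_subset_uIcc hs)) hab
        have h2 : |f2 s| ≤ M := hM s (Set.uIoc_subset_uIcc hs)
        calc |b - s| * |f2 s| ≤ h * M := by
              apply mul_le_mul h1 h2 (abs_nonneg _) hh
          _ = M * h := by ring)
    rwa [Real.norm_eq_abs] at this
  have : f0 b - f0 a - (b - a) * f1 a = ∫ s in a..b, (b - s) * f2 s := by rw [heq]; ring
  rw [this]
  calc |∫ s in a..b, (b - s) * f2 s| ≤ M * h * |b - a| := hb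
    _ ≤ M * h * h := by
        apply mul_le_mul_of_nonneg_left hab (by positivity)
    _ = M * h ^ 2 := by ring

lemma taylor3_eq {f0 f1 f2 f3 f4 : ℝ → ℝ}
    (d0 : ∀ x, HasDerivAt f0 (f1 x) x) (d1 : ∀ x, HasDerivAt f1 (f2 x) x)
    (d2 : ∀ x, HasDerivAt f2 (f3 x) x) (d3 : ∀ x, HasDerivAt f3 (f4 x) x)
    (c4 : Continuous f4) (a b : ℝ) :
    f0 b = f0 a + (b - a) * f1 a + (b - a) ^ 2 / 2 * f2 a + (b - a) ^ 3 / 6 * f3 a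
      + ∫ s in a..b, (b - s) ^ 3 / 6 * f4 s := by
  set g : ℝ → ℝ := fun t => f0 t + (b - t) * f1 t + (b - t) ^ 2 / 2 * f2 t
      + (b - t) ^ 3 / 6 * f3 t with hg
  have hgd : ∀ t, HasDerivAt g ((b - t) ^ 3 / 6 * f4 t) t := by
    intro t
    have t1 : HasDerivAt (fun y : ℝ => b - y) (-1) t := by
      simpa using (hasDerivAt_id t).const_sub b
    have total := (((d0 t).add (t1.mul (d1 t))).add
        (((t1.pow 2).div_const 2).mul (d2 t))).add
        (((t1.pow 3).div_const 6).mul (d3 t))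
    exact total.congr_deriv (by simp only [Pi.pow_apply]; ring)
  have hint : IntervalIntegrable (fun s => (b - s) ^ 3 / 6 * f4 s) MeasureTheory.volume a b :=
    ((((continuous_const.sub continuous_id).pow 3).div_const 6).mul c4).intervalIntegrable a b
  have := intervalIntegral.integral_eq_sub_of_hasDerivAt (fun t _ => hgd t) hint
  have hgb : g b = f0 b := by simp [hg]
  have hga : g a = f0 a + (b - a) * f1 a + (b - a) ^ 2 / 2 * f2 a + (b - a) ^ 3 / 6 * f3 a := by
    simp [hg]
  rw [this, hgb, hga]
  ring

lemma taylor3_bound {f0 f1 f2 f3 f4 : ℝ → ℝ}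
    (d0 : ∀ x, HasDerivAt f0 (f1 x) x) (d1 : ∀ x, HasDerivAt f1 (f2 x) x)
    (d2 : ∀ x, HasDerivAt f2 (f3 x) x) (d3 : ∀ x, HasDerivAt f3 (f4 x) x)
    (c4 : Continuous f4) {a b M h : ℝ} (hM0 : 0 ≤ M)
    (hM : ∀ s ∈ Set.uIcc a b, |f4 s| ≤ M) (hab : |b - a| ≤ h) :
    |f0 b - f0 a - (b - a) * f1 a - (b - a) ^ 2 / 2 * f2 a - (b - a) ^ 3 / 6 * f3 a|
      ≤ M * h ^ 4 / 6 := by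
  have hh : 0 ≤ h := le_trans (abs_nonneg _) hab
  have heq := taylor3_eq d0 d1 d2 d3 c4 a b
  have hb : |∫ s in a..b, (b - s) ^ 3 / 6 * f4 s| ≤ M * h ^ 3 / 6 * |b - a| := by
    have := intervalIntegral.norm_integral_le_of_norm_le_const
      (f := fun s => (b - s) ^ 3 / 6 * f4 s) (a := a) (b := b) (C := M * h ^ 3 / 6)
      (fun s hs => by
        rw [Real.norm_eq_abs, abs_mul, abs_div]
        have h1 : |b - s| ≤ h := le_trans (abs_sub_le_of_mem_uIcc (Set.uIoc_subset_uIcc hs)) hab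
        have h2 : |f4 s| ≤ M := hM s (Set.uIoc_subset_uIcc hs)
        have h3 : |(b - s) ^ 3| ≤ h ^ 3 := by
          rw [abs_pow]
          exact pow_le_pow_left₀ (abs_nonneg _) h1 3
        calc |(b - s) ^ 3| / |(6 : ℝ)| * |f4 s| ≤ h ^ 3 / 6 * M := by
              rw [show |(6:ℝ)| = 6 by norm_num]
              apply mul_le_mul (by linarith [h3]) h2 (abs_nonneg _) (by positivity)
          _ = M * h ^ 3 / 6 := by ring)
    rwa [Real.norm_eq_abs] at this
  have heq2 : f0 b - f0 a - (b - a) * f1 a - (b - a) ^ 2 / 2 * f2 a - (b - a) ^ 3 / 6 * f3 a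
      = ∫ s in a..b, (b - s) ^ 3 / 6 * f4 s := by rw [heq]; ring
  rw [heq2]
  calc |∫ s in a..b, (b - s) ^ 3 / 6 * f4 s| ≤ M * h ^ 3 / 6 * |b - a| := hb
    _ ≤ M * h ^ 3 / 6 * h := mul_le_mul_of_nonneg_left hab (by positivity)
    _ = M * h ^ 4 / 6 := by ring

lemma exists_small_of_integral_le {h : ℝ → ℝ} (hc : Continuous h)
    {a b D : ℝ} (hab : a < b) (hI : ∫ x in a..b, h x ≤ D) :
    ∃ p ∈ Set.Icc a b, h p ≤ D / (b - a) := by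
  obtain ⟨p, hp, hmin⟩ := isCompact_Icc.exists_isMinOn (Set.nonempty_Icc.2 hab.le)
    hc.continuousOn
  refine ⟨p, hp, ?_⟩
  have h1 : (b - a) * h p ≤ ∫ x in a..b, h x := by
    have h2 : ∫ _x in a..b, h p ≤ ∫ x in a..b, h x :=
      intervalIntegral.integral_mono_on hab.le intervalIntegrable_const
        (hc.intervalIntegrable a b) (fun x hx => hmin hx)
    simpa using h2
  rw [le_div_iff₀ (by linarith)]
  nlinarith

lemma abs_rpow_succ {a : ℝ} (ha : a ≠ 0) (ha1 : a + 1 ≠ 0) (t : ℝ) :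
    |t| ^ a * |t| = |t| ^ (a + 1) := by
  rcases eq_or_ne t 0 with h | h
  · simp [h, Real.zero_rpow ha, Real.zero_rpow ha1]
  · have h1 : (0:ℝ) < |t| := abs_pos.2 h
    rw [Real.rpow_add h1, Real.rpow_one]

lemma nl_id2 {r : ℝ} (hr : 2 < r) (t : ℝ) : |t| ^ (r - 2) * |t| = |t| ^ (r - 1) := by
  have := abs_rpow_succ (by linarith : r - 2 ≠ 0) (by intro hc; apply (by linarith : r - 1 ≠ 0); linarith) t
  rw [this]
  congr 1
  ring

lemma nl_id {r : ℝ} (hr : 2 < r) (t : ℝ) : |t| ^ (r - 2) * t * t = |t| ^ r := by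
  have h2 : t * t = |t| * |t| := (abs_mul_abs_self t).symm
  have e1 := nl_id2 hr t
  have e2 : |t| ^ (r - 1) * |t| = |t| ^ r := by
    have := abs_rpow_succ (by linarith : r - 1 ≠ 0) (by intro hc; apply (by linarith : r ≠ 0); linarith) t
    rw [this]
    congr 1
    ring
  calc |t| ^ (r - 2) * t * t = |t| ^ (r - 2) * (|t| * |t|) := by rw [mul_assoc, h2]
    _ = (|t| ^ (r - 2) * |t|) * |t| := by ring
    _ = |t| ^ (r - 1) * |t| := by rw [e1]
    _ = |t| ^ r := e2

lemma nl_le_one {r : ℝ} (hr : 2 < r) {t : ℝ} (ht : |t| ≤ 1) : |t| ^ (r - 2) * |t| ≤ 1 := by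
  rw [nl_id2 hr t]
  exact Real.rpow_le_one (abs_nonneg t) ht (by linarith)

set_option linter.unusedSectionVars false

section Scaled

variable {r ε : ℝ} {v0 v1 v2 v3 v4 : ℝ → ℝ}
  (hr : 2 < r) (hε0 : 0 < ε) (hε1 : ε ≤ 1)
  (d0 : ∀ x, HasDerivAt v0 (v1 x) x) (d1 : ∀ x, HasDerivAt v1 (v2 x) x)
  (d2 : ∀ x, HasDerivAt v2 (v3 x) x) (d3 : ∀ x, HasDerivAt v3 (v4 x) x)
  (hb : ∀ x, |v0 x| ≤ 1)
  (heq : ∀ x, v4 x = -(ε * v2 x) - |v0 x| ^ (r - 2) * v0 x)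

include d0 in
lemma cont_v0 : Continuous v0 := by
  have h : Differentiable ℝ v0 := fun x => (d0 x).differentiableAt
  exact h.continuous

include d1 in
lemma cont_v1 : Continuous v1 := by
  have h : Differentiable ℝ v1 := fun x => (d1 x).differentiableAt
  exact h.continuous

include d2 in
lemma cont_v2 : Continuous v2 := by
  have h : Differentiable ℝ v2 := fun x => (d2 x).differentiableAt
  exact h.continuous

include d3 in
lemma cont_v3 : Continuous v3 := by
  have h : Differentiable ℝ v3 := fun x => (d3 x).differentiableAt
  exact h.continuous

include hr d0 d2 heq in
lemma cont_v4 : Continuous v4 := by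
  have h1 : v4 = fun x => -(ε * v2 x) - |v0 x| ^ (r - 2) * v0 x := funext heq
  rw [h1]
  have c0 : Continuous v0 := cont_v0 d0
  have c2 : Continuous v2 := cont_v2 d2
  have crpow : Continuous fun x => |v0 x| ^ (r - 2) := by
    rw [continuous_iff_continuousAt]
    intro x
    exact ContinuousAt.rpow_const c0.abs.continuousAt (Or.inr (by linarith))
  exact ((continuous_const.mul c2).neg).sub (crpow.mul c0)

include hr hε0 hε1 d0 d1 d2 d3 hb heq

lemma v4_abs_le (x : ℝ) : |v4 x| ≤ ε * |v2 x| + 1 := by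
  rw [heq x]
  have h0 : -(ε * v2 x) - |v0 x| ^ (r - 2) * v0 x = -(ε * v2 x + |v0 x| ^ (r - 2) * v0 x) := by
    ring
  rw [h0, abs_neg]
  have h1 := abs_add_le (ε * v2 x) (|v0 x| ^ (r - 2) * v0 x)
  have h2 : |(|v0 x| ^ (r - 2) * v0 x)| = |v0 x| ^ (r - 2) * |v0 x| := by
    rw [abs_mul, abs_of_nonneg (Real.rpow_nonneg (abs_nonneg _) _)]
  have h3 : |v0 x| ^ (r - 2) * |v0 x| ≤ 1 := nl_le_one hr (hb x)
  have h4 : |ε * v2 x| = ε * |v2 x| := by rw [abs_mul, abs_of_pos hε0]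
  rw [h2, h4] at h1
  linarith

lemma local_growth (x₀ y : ℝ) (hxy : |y - x₀| ≤ 1/8) :
    |v2 y| + |v3 y| ≤ 2 * (|v2 x₀| + |v3 x₀|) + 1 := by
  have c3 : Continuous v3 := cont_v3 d3
  have c4 : Continuous v4 := cont_v4 hr d0 d2 heq
  obtain ⟨p, hp, hmax⟩ := isCompact_uIcc.exists_isMaxOn (nonempty_uIcc (a := x₀) (b := y))
    (((cont_v2 d2).abs.add c3.abs).continuousOn)
  have hsub : Set.uIcc x₀ p ⊆ Set.uIcc x₀ y :=
    Set.uIcc_subset_uIcc Set.left_mem_uIcc hp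
  have hmp0 : 0 ≤ |v2 p| + |v3 p| := add_nonneg (abs_nonneg _) (abs_nonneg _)
  have hpx : |p - x₀| ≤ 1/8 := le_trans (abs_sub_le_of_mem_uIcc' hp) hxy
  have h2 : |v2 p - v2 x₀| ≤ (|v2 p| + |v3 p|) * |p - x₀| := by
    apply ftc_bound d2 c3
    intro s hs
    exact le_trans (le_add_of_nonneg_left (abs_nonneg _)) (hmax (hsub hs))
  have h3 : |v3 p - v3 x₀| ≤ (|v2 p| + |v3 p| + 1) * |p - x₀| := by
    apply ftc_bound d3 c4
    intro s hs
    have ha := v4_abs_le hr hε0 hε1 d0 d1 d2 d3 hb heq s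
    have hc : ε * |v2 s| ≤ |v2 s| := mul_le_of_le_one_left (abs_nonneg _) hε1
    have hd : |v2 s| ≤ |v2 p| + |v3 p| :=
      le_trans (le_add_of_nonneg_right (abs_nonneg _)) (hmax (hsub hs))
    linarith
  have h4 : |v2 p - v2 x₀| ≤ (|v2 p| + |v3 p|) * (1/8) :=
    le_trans h2 (mul_le_mul_of_nonneg_left hpx hmp0)
  have h5 : |v3 p - v3 x₀| ≤ (|v2 p| + |v3 p| + 1) * (1/8) :=
    le_trans h3 (mul_le_mul_of_nonneg_left hpx (by linarith))
  have h6 : |v2 y| + |v3 y| ≤ |v2 p| + |v3 p| := hmax Set.right_mem_uIcc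
  have h7 : |v2 p| ≤ |v2 x₀| + |v2 p - v2 x₀| := by
    calc |v2 p| = |v2 x₀ + (v2 p - v2 x₀)| := by ring_nf
      _ ≤ |v2 x₀| + |v2 p - v2 x₀| := abs_add_le _ _
  have h8 : |v3 p| ≤ |v3 x₀| + |v3 p - v3 x₀| := by
    calc |v3 p| = |v3 x₀ + (v3 p - v3 x₀)| := by ring_nf
      _ ≤ |v3 x₀| + |v3 p - v3 x₀| := abs_add_le _ _
  have h9 : 0 ≤ |v2 x₀| + |v3 x₀| := add_nonneg (abs_nonneg _) (abs_nonneg _)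
  linarith

lemma growth (x : ℝ) :
    |v2 x| + |v3 x| ≤ (|v2 0| + |v3 0| + 1) * 2 ^ ((8:ℝ) * |x| + 1) := by
  set m0 : ℝ := |v2 0| + |v3 0| with hm0
  have hm00 : 0 ≤ m0 := add_nonneg (abs_nonneg _) (abs_nonneg _)
  have claim : ∀ j : ℕ, ∀ y : ℝ, |y| ≤ (j : ℝ) / 8 →
      |v2 y| + |v3 y| ≤ (m0 + 1) * 2 ^ j - 1 := by
    intro j
    induction j with
    | zero =>
      intro y hy
      have hy0 : |y| = 0 := le_antisymm (by simpa using hy) (abs_nonneg y)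
      rw [abs_eq_zero.1 hy0]
      simp [hm0]
    | succ j ih =>
      intro y hy
      have hpow : (1:ℝ) ≤ 2 ^ j := one_le_pow₀ (by norm_num)
      have h4 : (2:ℝ) ^ (j + 1) = 2 * 2 ^ j := by rw [pow_succ]; ring
      rcases le_or_gt |y| ((j : ℝ) / 8) with h | h
      · have := ih y h
        nlinarith
      · have hy' : |y| ≤ ((j : ℝ) + 1) / 8 := by push_cast at hy; linarith
        rcases le_or_gt 0 y with hs | hs
        · rw [abs_of_nonneg hs] at h hy'
          have h1 : |y - (j : ℝ) / 8| ≤ 1 / 8 := by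
            rw [abs_of_nonneg (by linarith)]
            linarith
          have h2 := local_growth hr hε0 hε1 d0 d1 d2 d3 hb heq ((j : ℝ) / 8) y h1
          have h3 := ih ((j : ℝ) / 8) (by rw [abs_of_nonneg (by positivity)])
          nlinarith
        · rw [abs_of_neg hs] at h hy'
          have h1 : |y - (-((j : ℝ) / 8))| ≤ 1 / 8 := by
            rw [abs_of_nonpos (by linarith)]
            linarith
          have h2 := local_growth hr hε0 hε1 d0 d1 d2 d3 hb heq (-((j : ℝ) / 8)) y h1
          have h3 := ih (-((j : ℝ) / 8)) (by rw [abs_neg, abs_of_nonneg (by positivity)])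
          nlinarith
  set j : ℕ := ⌈(8:ℝ) * |x|⌉₊ with hj
  have h1 : |x| ≤ (j : ℝ) / 8 := by
    have := Nat.le_ceil ((8:ℝ) * |x|)
    rw [← hj] at this
    linarith
  have h2 := claim j x h1
  have h3 : (2:ℝ) ^ j = (2:ℝ) ^ (j : ℝ) := (Real.rpow_natCast 2 j).symm
  have h4 : (2:ℝ) ^ (j : ℝ) ≤ 2 ^ ((8:ℝ) * |x| + 1) := by
    apply Real.rpow_le_rpow_of_exponent_le one_le_two
    have := Nat.ceil_lt_add_one (by positivity : (0:ℝ) ≤ 8 * |x|)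
    rw [← hj] at this
    linarith
  have h5 : (m0 + 1) * ((2:ℝ) ^ j) ≤ (m0 + 1) * 2 ^ ((8:ℝ) * |x| + 1) := by
    rw [h3]
    exact mul_le_mul_of_nonneg_left h4 (by linarith)
  linarith


set_option maxHeartbeats 1000000 in
lemma bound_v2 (x : ℝ) : |v2 x| ≤ 66 := by
  have c4 : Continuous v4 := cont_v4 hr d0 d2 heq
  set K : ℝ := 2 * (|v2 0| + |v3 0| + 1) with hK
  have hK0 : 0 ≤ K := by
    have := abs_nonneg (v2 0); have := abs_nonneg (v3 0); rw [hK]; linarith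
  have base : ∀ y : ℝ, |v2 y| ≤ 66 + K * (1/12)^(0:ℕ) * 2 ^ ((8:ℝ)*|y|) := by
    intro y
    have h := growth hr hε0 hε1 d0 d1 d2 d3 hb heq y
    have h2 : (2:ℝ) ^ ((8:ℝ)*|y| + 1) = 2 ^ ((8:ℝ)*|y|) * 2 := by
      rw [Real.rpow_add two_pos, Real.rpow_one]
    rw [h2] at h
    have h3 := abs_nonneg (v3 y)
    have h4 : (0:ℝ) < 2 ^ ((8:ℝ)*|y|) := Real.rpow_pos_of_pos two_pos _
    rw [hK]
    rw [pow_zero]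
    nlinarith
  have step : ∀ n : ℕ, (∀ y : ℝ, |v2 y| ≤ 66 + K * (1/12)^n * 2 ^ ((8:ℝ)*|y|)) →
      ∀ y : ℝ, |v2 y| ≤ 66 + K * (1/12)^(n+1) * 2 ^ ((8:ℝ)*|y|) := by
    intro n ih y
    set C : ℝ := 2 ^ ((8:ℝ)*|y|) with hC
    have hC0 : (0:ℝ) < C := Real.rpow_pos_of_pos two_pos _
    set M : ℝ := 67 + K * (1/12)^n * (4 * C) with hM
    have hM0 : 0 ≤ M := by
      have : 0 ≤ K * (1/12)^n * (4 * C) := by positivity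
      rw [hM]; linarith
    have hMR : M = 67 + 48 * (K * (1/12)^(n+1) * C) := by
      rw [hM, pow_succ]; ring
    have hMs : ∀ s : ℝ, |s - y| ≤ 1/4 → |v4 s| ≤ M := by
      intro s hs
      have h1 := v4_abs_le hr hε0 hε1 d0 d1 d2 d3 hb heq s
      have h2 : ε * |v2 s| ≤ |v2 s| := mul_le_of_le_one_left (abs_nonneg _) hε1
      have h3 := ih s
      have h5 : |s| ≤ |y| + 1/4 := by
        calc |s| = |y + (s - y)| := by ring_nf
          _ ≤ |y| + |s - y| := abs_add_le _ _
          _ ≤ |y| + 1/4 := by linarith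
      have h4 : (2:ℝ)^((8:ℝ)*|s|) ≤ 4 * C := by
        calc (2:ℝ)^((8:ℝ)*|s|) ≤ 2^((8:ℝ)*|y| + 2) :=
              Real.rpow_le_rpow_of_exponent_le one_le_two (by linarith)
          _ = 4 * C := by
              rw [Real.rpow_add two_pos, hC]
              rw [show ((2:ℝ):ℝ) ^ (2:ℝ) = ((2:ℝ):ℝ) ^ ((2:ℕ):ℝ) by norm_num,
                Real.rpow_natCast]
              norm_num
              ring
      have h6 : K * (1/12)^n * 2^((8:ℝ)*|s|) ≤ K * (1/12)^n * (4*C) :=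
        mul_le_mul_of_nonneg_left h4 (by positivity)
      rw [hM]
      calc |v4 s| ≤ ε * |v2 s| + 1 := h1
        _ ≤ |v2 s| + 1 := by linarith
        _ ≤ 67 + K * (1/12)^n * (4 * C) := by linarith
    have T₁ := taylor3_bound d0 d1 d2 d3 c4 (a := y) (b := y + 1/4) (M := M) (h := 1/4) hM0
      (fun s hs => hMs s (by
        have := abs_sub_le_of_mem_uIcc' hs
        rw [show y + 1/4 - y = (1/4:ℝ) by ring] at this
        exact this.trans (by rw [abs_of_nonneg] <;> norm_num)))
      (by rw [show y + 1/4 - y = (1/4:ℝ) by ring, abs_of_nonneg] <;> norm_num)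
    have T₂ := taylor3_bound d0 d1 d2 d3 c4 (a := y) (b := y - 1/4) (M := M) (h := 1/4) hM0
      (fun s hs => hMs s (by
        have := abs_sub_le_of_mem_uIcc' hs
        rw [show y - 1/4 - y = -(1/4:ℝ) by ring] at this
        rw [abs_neg] at this
        exact this.trans (by rw [abs_of_nonneg] <;> norm_num)))
      (by rw [show y - 1/4 - y = -(1/4:ℝ) by ring, abs_neg, abs_of_nonneg] <;> norm_num)
    rw [show y + 1/4 - y = (1/4:ℝ) by ring] at T₁
    rw [show y - 1/4 - y = -(1/4:ℝ) by ring] at T₂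
    have hA := hb (y + 1/4)
    have hB := hb (y - 1/4)
    have hO := hb y
    rw [abs_le] at T₁ T₂ hA hB hO
    rw [abs_le]
    constructor
    · linarith [T₁.1, T₁.2, T₂.1, T₂.2, hA.1, hA.2, hB.1, hB.2, hO.1, hO.2, hMR]
    · linarith [T₁.1, T₁.2, T₂.1, T₂.2, hA.1, hA.2, hB.1, hB.2, hO.1, hO.2, hMR]
  have tail : ∀ n : ℕ, ∀ y : ℝ, |v2 y| ≤ 66 + K * (1/12)^n * 2^((8:ℝ)*|y|) := by
    intro n
    induction n with
    | zero => exact base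
    | succ n ih => exact step n ih
  have hT : Tendsto (fun n : ℕ => 66 + K * (1/12)^n * 2^((8:ℝ)*|x|)) atTop (nhds 66) := by
    have h1 : Tendsto (fun n : ℕ => (1/12:ℝ)^n) atTop (nhds 0) :=
      tendsto_pow_atTop_nhds_zero_of_lt_one (by norm_num) (by norm_num)
    have h2 := ((h1.const_mul K).mul_const ((2:ℝ)^((8:ℝ)*|x|))).const_add (66:ℝ)
    rw [show (66:ℝ) + K * 0 * (2:ℝ)^((8:ℝ)*|x|) = 66 by ring] at h2
    exact h2
  exact ge_of_tendsto' hT (fun n => tail n x)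

lemma bound_v4 (x : ℝ) : |v4 x| ≤ 67 := by
  have h1 := v4_abs_le hr hε0 hε1 d0 d1 d2 d3 hb heq x
  have h2 : ε * |v2 x| ≤ |v2 x| := mul_le_of_le_one_left (abs_nonneg _) hε1
  have h3 := bound_v2 hr hε0 hε1 d0 d1 d2 d3 hb heq x
  linarith

lemma bound_v1 (x : ℝ) : |v1 x| ≤ 68 := by
  have T := taylor1_bound d0 d1 (cont_v2 d2) (a := x) (b := x + 1) (M := 66) (h := 1)
    (by norm_num) (fun s _ => bound_v2 hr hε0 hε1 d0 d1 d2 d3 hb heq s)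
    (by rw [show x + 1 - x = (1:ℝ) by ring, abs_of_nonneg] <;> norm_num)
  rw [show x + 1 - x = (1:ℝ) by ring] at T
  have hA := hb (x + 1)
  have hO := hb x
  rw [abs_le] at T hA hO
  rw [abs_le]
  constructor
  · linarith [T.1, T.2, hA.1, hA.2, hO.1, hO.2]
  · linarith [T.1, T.2, hA.1, hA.2, hO.1, hO.2]

lemma bound_v3 (x : ℝ) : |v3 x| ≤ 199 := by
  have c4 : Continuous v4 := cont_v4 hr d0 d2 heq
  have T := taylor1_bound d2 d3 c4 (a := x) (b := x + 1) (M := 67) (h := 1)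
    (by norm_num) (fun s _ => bound_v4 hr hε0 hε1 d0 d1 d2 d3 hb heq s)
    (by rw [show x + 1 - x = (1:ℝ) by ring, abs_of_nonneg] <;> norm_num)
  rw [show x + 1 - x = (1:ℝ) by ring] at T
  have hA := bound_v2 hr hε0 hε1 d0 d1 d2 d3 hb heq (x + 1)
  have hO := bound_v2 hr hε0 hε1 d0 d1 d2 d3 hb heq x
  rw [abs_le] at T hA hO
  rw [abs_le]
  constructor
  · linarith [T.1, T.2, hA.1, hA.2, hO.1, hO.2]
  · linarith [T.1, T.2, hA.1, hA.2, hO.1, hO.2]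


end Scaled


lemma uIcc_subset_Icc' {a b c d : ℝ} (h1 : a ∈ Set.Icc c d) (h2 : b ∈ Set.Icc c d)
    (hcd : c ≤ d) : Set.uIcc a b ⊆ Set.Icc c d := by
  rw [← Set.uIcc_of_le hcd]
  exact Set.uIcc_subset_uIcc (by rw [Set.uIcc_of_le hcd]; exact h1)
    (by rw [Set.uIcc_of_le hcd]; exact h2)

lemma abs_le_rpow_inv {r t D : ℝ} (hr : 0 < r) (h : |t| ^ r ≤ D) : |t| ≤ D ^ (1/r) := by
  have h1 : ((|t| ^ r) ^ (r⁻¹)) ≤ D ^ r⁻¹ :=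
    Real.rpow_le_rpow (Real.rpow_nonneg (abs_nonneg t) r) h (inv_nonneg.2 hr.le)
  rw [Real.rpow_rpow_inv (abs_nonneg t) hr.ne'] at h1
  rw [one_div]
  exact h1

lemma abs_le_rpow_half {t D : ℝ} (h : t^2 ≤ D) : |t| ≤ D ^ ((1:ℝ)/2) := by
  have h1 := Real.sqrt_le_sqrt h
  rw [Real.sqrt_sq_eq_abs, Real.sqrt_eq_rpow] at h1
  exact h1

noncomputable def FF (ε : ℝ) (v0 v1 v2 v3 : ℝ → ℝ) : ℝ → ℝ :=
  fun t => v3 t * v0 t - v2 t * v1 t + ε * (v0 t * v1 t)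

section Scaled2

variable {r ε : ℝ} {v0 v1 v2 v3 v4 : ℝ → ℝ}
  (hr : 2 < r) (hε0 : 0 < ε) (hε1 : ε ≤ 1)
  (d0 : ∀ x, HasDerivAt v0 (v1 x) x) (d1 : ∀ x, HasDerivAt v1 (v2 x) x)
  (d2 : ∀ x, HasDerivAt v2 (v3 x) x) (d3 : ∀ x, HasDerivAt v3 (v4 x) x)
  (hb : ∀ x, |v0 x| ≤ 1)
  (heq : ∀ x, v4 x = -(ε * v2 x) - |v0 x| ^ (r - 2) * v0 x)

include hr hε0 hε1 d0 d1 d2 d3 hb heq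

lemma cont_rpow_r : Continuous (fun x => |v0 x| ^ r) := by
  rw [continuous_iff_continuousAt]
  intro x
  exact ContinuousAt.rpow_const (cont_v0 d0).abs.continuousAt (Or.inr (by linarith))

lemma cont_g : Continuous (fun x => |v0 x| ^ r + (v2 x)^2) :=
  (cont_rpow_r hr hε0 hε1 d0 d1 d2 d3 hb heq).add ((cont_v2 d2).pow 2)

lemma hasDerivAt_F (x : ℝ) :
    HasDerivAt (FF ε v0 v1 v2 v3)
      (ε * (v1 x)^2 - (v2 x)^2 - |v0 x| ^ r) x := by
  have h := (((d3 x).mul (d0 x)).sub ((d2 x).mul (d1 x))).add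
    (((d0 x).mul (d1 x)).const_mul ε)
  refine h.congr_deriv ?_
  rw [heq x]
  have e1 := nl_id hr (v0 x)
  linear_combination -e1

lemma bound_F (x : ℝ) : |FF ε v0 v1 v2 v3 x| ≤ 4800 := by
  have h1 : |FF ε v0 v1 v2 v3 x| ≤ |v3 x * v0 x| + |v2 x * v1 x| + |ε * (v0 x * v1 x)| := by
    unfold FF
    calc |v3 x * v0 x - v2 x * v1 x + ε * (v0 x * v1 x)|
        ≤ |v3 x * v0 x - v2 x * v1 x| + |ε * (v0 x * v1 x)| := abs_add_le _ _
      _ ≤ |v3 x * v0 x| + |v2 x * v1 x| + |ε * (v0 x * v1 x)| := by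
          linarith [abs_sub (v3 x * v0 x) (v2 x * v1 x)]
  have h2 : |v3 x * v0 x| ≤ 199 := by
    rw [abs_mul]
    calc |v3 x| * |v0 x| ≤ 199 * 1 := by
          apply mul_le_mul (bound_v3 hr hε0 hε1 d0 d1 d2 d3 hb heq x) (hb x)
            (abs_nonneg _) (by norm_num)
      _ = 199 := by norm_num
  have h3 : |v2 x * v1 x| ≤ 4488 := by
    rw [abs_mul]
    calc |v2 x| * |v1 x| ≤ 66 * 68 := by
          apply mul_le_mul (bound_v2 hr hε0 hε1 d0 d1 d2 d3 hb heq x)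
            (bound_v1 hr hε0 hε1 d0 d1 d2 d3 hb heq x) (abs_nonneg _) (by norm_num)
      _ = 4488 := by norm_num
  have h4 : |ε * (v0 x * v1 x)| ≤ 68 := by
    rw [abs_mul, abs_mul]
    have hε : |ε| ≤ 1 := by rw [abs_of_pos hε0]; exact hε1
    calc |ε| * (|v0 x| * |v1 x|) ≤ 1 * (1 * 68) := by
          apply mul_le_mul hε _ (by positivity) (by norm_num)
          apply mul_le_mul (hb x) (bound_v1 hr hε0 hε1 d0 d1 d2 d3 hb heq x)
            (abs_nonneg _) (by norm_num)
      _ = 68 := by norm_num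
  linarith

lemma int_identity (a b : ℝ) :
    ∫ x in a..b, (|v0 x| ^ r + (v2 x)^2)
      = ε * (∫ x in a..b, (v1 x)^2) - (FF ε v0 v1 v2 v3 b - FF ε v0 v1 v2 v3 a) := by
  have cg : Continuous (fun x => |v0 x| ^ r + (v2 x)^2) :=
    cont_g hr hε0 hε1 d0 d1 d2 d3 hb heq
  have c1sq : Continuous (fun x => (v1 x)^2) := (cont_v1 d1).pow 2
  have hFTC := intervalIntegral.integral_eq_sub_of_hasDerivAt
    (f := FF ε v0 v1 v2 v3) (f' := fun x => ε * (v1 x)^2 - (v2 x)^2 - |v0 x| ^ r)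
    (fun x _ => hasDerivAt_F hr hε0 hε1 d0 d1 d2 d3 hb heq x)
    ((((continuous_const.mul c1sq)).sub ((cont_v2 d2).pow 2)).sub
      (cont_rpow_r hr hε0 hε1 d0 d1 d2 d3 hb heq) |>.intervalIntegrable a b)
  have hre : (fun x => ε * (v1 x)^2 - (v2 x)^2 - |v0 x| ^ r)
      = fun x => ε * (v1 x)^2 - (|v0 x| ^ r + (v2 x)^2) := by
    funext x; ring
  rw [hre] at hFTC
  rw [intervalIntegral.integral_sub (f := fun x => ε * (v1 x)^2) (g := fun x => |v0 x| ^ r + (v2 x)^2) ((continuous_const.mul c1sq).intervalIntegrable a b)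
    (cg.intervalIntegrable a b), intervalIntegral.integral_const_mul] at hFTC
  linarith

lemma int_g_le (a b : ℝ) (hab : a ≤ b) :
    ∫ x in a..b, (|v0 x| ^ r + (v2 x)^2) ≤ 4624 * (ε * (b - a)) + 9600 := by
  have hid := int_identity hr hε0 hε1 d0 d1 d2 d3 hb heq a b
  have h1 : ∫ x in a..b, (v1 x)^2 ≤ 4624 * (b - a) := by
    have h2 : ∫ x in a..b, (v1 x)^2 ≤ ∫ _x in a..b, (4624:ℝ) := by
      apply intervalIntegral.integral_mono_on hab (((cont_v1 d1).pow 2).intervalIntegrable a b)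
        intervalIntegrable_const
      intro x _
      simp only [Pi.pow_apply]
      nlinarith [sq_abs (v1 x), bound_v1 hr hε0 hε1 d0 d1 d2 d3 hb heq x, abs_nonneg (v1 x)]
    rw [intervalIntegral.integral_const, smul_eq_mul] at h2
    linarith
  have h2 : ε * (∫ x in a..b, (v1 x)^2) ≤ ε * (4624 * (b - a)) :=
    mul_le_mul_of_nonneg_left h1 hε0.le
  have h3 := bound_F hr hε0 hε1 d0 d1 d2 d3 hb heq a
  have h4 := bound_F hr hε0 hε1 d0 d1 d2 d3 hb heq b
  rw [abs_le] at h3 h4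
  rw [hid]
  have h5 : ε * (4624 * (b - a)) = 4624 * (ε * (b - a)) := by ring
  linarith

lemma int_g_nonneg (a b : ℝ) (hab : a ≤ b) :
    0 ≤ ∫ x in a..b, (|v0 x| ^ r + (v2 x)^2) := by
  apply intervalIntegral.integral_nonneg hab
  intro x _
  have := Real.rpow_nonneg (abs_nonneg (v0 x)) r
  nlinarith [sq_nonneg (v2 x)]


set_option maxHeartbeats 1600000 in
lemma block (c δ : ℝ) (hδ0 : 0 < δ) (hδ1 : δ ≤ 1)
    (hint : ∫ x in (c-5)..(c+5), (|v0 x| ^ r + (v2 x)^2) ≤ δ) :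
    |FF ε v0 v1 v2 v3 c| ≤ δ^((1:ℝ)/2)/4 + 13600*δ^((1:ℝ)/3)
      + 10*((7/2)*δ^(1/r) + 20000*δ^((1:ℝ)/3))^(r-1) + 728*ε := by
  have hr0 : (0:ℝ) < r := by linarith
  have cg : Continuous (fun x => |v0 x| ^ r + (v2 x)^2) :=
    cont_g hr hε0 hε1 d0 d1 d2 d3 hb heq
  have c0r : Continuous (fun x => |v0 x| ^ r) := cont_rpow_r hr hε0 hε1 d0 d1 d2 d3 hb heq
  have c2sq : Continuous (fun x => (v2 x)^2) := (cont_v2 d2).pow 2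
  have hsub : ∀ a' b', c-5 ≤ a' → a' ≤ b' → b' ≤ c+5 →
      (∫ x in a'..b', (|v0 x| ^ r + (v2 x)^2)) ≤ δ := by
    intro a' b' h1 h2 h3
    refine le_trans (intervalIntegral.integral_mono_interval h1 h2 h3
      (MeasureTheory.ae_of_all _ (fun x => ?_)) (cg.intervalIntegrable _ _)) hint
    simp only [Pi.zero_apply]
    positivity
  have hcomp0 : ∀ a' b', c-5 ≤ a' → a' < b' → b' ≤ c+5 →
      ∃ p ∈ Set.Icc a' b', |v0 p| ^ r ≤ δ/(b'-a') := by
    intro a' b' h1 h2 h3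
    apply exists_small_of_integral_le c0r h2
    calc ∫ x in a'..b', |v0 x| ^ r ≤ ∫ x in a'..b', (|v0 x| ^ r + (v2 x)^2) := by
          apply intervalIntegral.integral_mono_on h2.le (c0r.intervalIntegrable _ _)
            (cg.intervalIntegrable _ _)
          intro x _
          nlinarith [sq_nonneg (v2 x)]
      _ ≤ δ := hsub a' b' h1 h2.le h3
  have hcomp2 : ∀ a' b', c-5 ≤ a' → a' < b' → b' ≤ c+5 →
      ∃ p ∈ Set.Icc a' b', (v2 p)^2 ≤ δ/(b'-a') := by
    intro a' b' h1 h2 h3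
    apply exists_small_of_integral_le c2sq h2
    calc ∫ x in a'..b', (v2 x)^2 ≤ ∫ x in a'..b', (|v0 x| ^ r + (v2 x)^2) := by
          apply intervalIntegral.integral_mono_on h2.le (c2sq.intervalIntegrable _ _)
            (cg.intervalIntegrable _ _)
          intro x _
          nlinarith [Real.rpow_nonneg (abs_nonneg (v0 x)) r]
      _ ≤ δ := hsub a' b' h1 h2.le h3
  -- small |v0| points
  obtain ⟨a₁, ha₁mem, ha₁⟩ := hcomp0 (c-5) (c-4) le_rfl (by linarith) (by linarith)
  obtain ⟨a₂, ha₂mem, ha₂⟩ := hcomp0 (c+4) (c+5) (by linarith) (by linarith) le_rfl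
  rw [show c-4-(c-5) = (1:ℝ) by ring, div_one] at ha₁
  rw [show c+5-(c+4) = (1:ℝ) by ring, div_one] at ha₂
  have ha₁' : |v0 a₁| ≤ δ^(1/r) := abs_le_rpow_inv hr0 ha₁
  have ha₂' : |v0 a₂| ≤ δ^(1/r) := abs_le_rpow_inv hr0 ha₂
  -- small |v2| points
  obtain ⟨b₁, hb₁mem, hb₁⟩ := hcomp2 (c-5) (c-4) le_rfl (by linarith) (by linarith)
  obtain ⟨b₂, hb₂mem, hb₂⟩ := hcomp2 (c+4) (c+5) (by linarith) (by linarith) le_rfl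
  rw [show c-4-(c-5) = (1:ℝ) by ring, div_one] at hb₁
  rw [show c+5-(c+4) = (1:ℝ) by ring, div_one] at hb₂
  have hb₁' : |v2 b₁| ≤ δ^((1:ℝ)/2) := abs_le_rpow_half hb₁
  have hb₂' : |v2 b₂| ≤ δ^((1:ℝ)/2) := abs_le_rpow_half hb₂
  have hδr0 : 0 < δ^(1/r) := Real.rpow_pos_of_pos hδ0 _
  have hδ30 : 0 < δ^((1:ℝ)/3) := Real.rpow_pos_of_pos hδ0 _
  have hδ20 : 0 < δ^((1:ℝ)/2) := Real.rpow_pos_of_pos hδ0 _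
  -- pointwise bound on |v2| on the block
  have hw2 : ∀ x, c-5 ≤ x → x ≤ c+5 → |v2 x| ≤ 200 * δ^((1:ℝ)/3) := by
    intro x hx1 hx2
    have hη1 : δ^((1:ℝ)/3) ≤ 1 := Real.rpow_le_one hδ0.le hδ1 (by norm_num)
    have key : ∀ p : ℝ, |x - p| ≤ δ^((1:ℝ)/3) → (v2 p)^2 ≤ δ/(δ^((1:ℝ)/3)) →
        |v2 x| ≤ 200 * δ^((1:ℝ)/3) := by
      intro p hxp hp
      have hp2 : (v2 p)^2 ≤ δ^((2:ℝ)/3) := by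
        have hde : δ/(δ^((1:ℝ)/3)) = δ^((2:ℝ)/3) := by
          rw [show (2:ℝ)/3 = 1 - (1:ℝ)/3 by norm_num, Real.rpow_sub hδ0, Real.rpow_one]
        rwa [hde] at hp
      have hp3 : |v2 p| ≤ δ^((1:ℝ)/3) := by
        have := abs_le_rpow_half hp2
        rwa [← Real.rpow_mul hδ0.le, show (2:ℝ)/3 * (1/2) = (1:ℝ)/3 by norm_num] at this
      have hprop : |v2 x - v2 p| ≤ 199 * |x - p| := by
        apply ftc_bound d2 (cont_v3 d3)
        intro s _
        exact bound_v3 hr hε0 hε1 d0 d1 d2 d3 hb heq s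
      have h199 : 199 * |x - p| ≤ 199 * δ^((1:ℝ)/3) :=
        mul_le_mul_of_nonneg_left hxp (by norm_num)
      have htri : |v2 x| ≤ |v2 p| + |v2 x - v2 p| := by
        calc |v2 x| = |v2 p + (v2 x - v2 p)| := by ring_nf
          _ ≤ |v2 p| + |v2 x - v2 p| := abs_add_le _ _
      linarith
    rcases le_total x c with hxc | hxc
    · obtain ⟨p, hpmem, hp⟩ := hcomp2 x (x + δ^((1:ℝ)/3)) hx1 (by linarith) (by linarith)
      rw [show x + δ^((1:ℝ)/3) - x = δ^((1:ℝ)/3) by ring] at hp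
      refine key p ?_ hp
      rw [abs_sub_comm, abs_of_nonneg (by linarith [hpmem.1])]
      linarith [hpmem.2]
    · obtain ⟨p, hpmem, hp⟩ := hcomp2 (x - δ^((1:ℝ)/3)) x (by linarith) (by linarith) hx2
      rw [show x - (x - δ^((1:ℝ)/3)) = δ^((1:ℝ)/3) by ring] at hp
      refine key p ?_ hp
      rw [abs_of_nonneg (by linarith [hpmem.2])]
      linarith [hpmem.1]
  -- slope point for v1
  have ha₁2 : a₁ ≤ c - 4 := ha₁mem.2
  have ha₂1 : c + 4 ≤ a₂ := ha₂mem.1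
  obtain ⟨m₁, hm₁mem, hm₁⟩ := exists_hasDerivAt_eq_slope v0 v1 (by linarith : a₁ < a₂)
    (cont_v0 d0).continuousOn (fun x _ => d0 x)
  have hm₁J : m₁ ∈ Set.Icc (c-5) (c+5) :=
    ⟨by linarith [hm₁mem.1, ha₁mem.1], by linarith [hm₁mem.2, ha₂mem.2]⟩
  have hv1m : |v1 m₁| ≤ δ^(1/r)/4 := by
    rw [hm₁, abs_div]
    have hnum : |v0 a₂ - v0 a₁| ≤ 2 * δ^(1/r) := by
      calc |v0 a₂ - v0 a₁| ≤ |v0 a₂| + |v0 a₁| := abs_sub _ _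
        _ ≤ 2 * δ^(1/r) := by linarith
    have hden : |a₂ - a₁| = a₂ - a₁ := abs_of_pos (by linarith)
    rw [hden]
    calc |v0 a₂ - v0 a₁| / (a₂ - a₁) ≤ 2 * δ^(1/r) / 8 :=
          div_le_div₀ (by positivity) hnum (by norm_num) (by linarith)
      _ = δ^(1/r)/4 := by ring
  -- pointwise bound on |v1| on the block
  have hw1 : ∀ x, c-5 ≤ x → x ≤ c+5 → |v1 x| ≤ δ^(1/r)/4 + 2000 * δ^((1:ℝ)/3) := by
    intro x hx1 hx2
    have hprop : |v1 x - v1 m₁| ≤ (200 * δ^((1:ℝ)/3)) * |x - m₁| := by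
      apply ftc_bound d1 (cont_v2 d2)
      intro s hs
      have hsJ := uIcc_subset_Icc' (Set.mem_Icc.2 ⟨hm₁J.1, hm₁J.2⟩)
        (Set.mem_Icc.2 ⟨hx1, hx2⟩) (by linarith) hs
      exact hw2 s hsJ.1 hsJ.2
    have hxm : |x - m₁| ≤ 10 := by
      rw [abs_le]
      constructor <;> [linarith [hm₁J.2]; linarith [hm₁J.1]]
    have h10 : (200 * δ^((1:ℝ)/3)) * |x - m₁| ≤ 2000 * δ^((1:ℝ)/3) := by
      calc (200 * δ^((1:ℝ)/3)) * |x - m₁| ≤ (200 * δ^((1:ℝ)/3)) * 10 :=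
            mul_le_mul_of_nonneg_left hxm (by positivity)
        _ = 2000 * δ^((1:ℝ)/3) := by ring
    have htri : |v1 x| ≤ |v1 m₁| + |v1 x - v1 m₁| := by
      calc |v1 x| = |v1 m₁ + (v1 x - v1 m₁)| := by ring_nf
        _ ≤ |v1 m₁| + |v1 x - v1 m₁| := abs_add_le _ _
    linarith
  -- pointwise bound on |v0| on the block
  have hw0 : ∀ x, c-5 ≤ x → x ≤ c+5 → |v0 x| ≤ (7/2) * δ^(1/r) + 20000 * δ^((1:ℝ)/3) := by
    intro x hx1 hx2
    have hprop : |v0 x - v0 a₁| ≤ (δ^(1/r)/4 + 2000 * δ^((1:ℝ)/3)) * |x - a₁| := by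
      apply ftc_bound d0 (cont_v1 d1)
      intro s hs
      have hsJ := uIcc_subset_Icc' (Set.mem_Icc.2 ⟨by linarith [ha₁mem.1], by linarith [ha₁mem.2]⟩)
        (Set.mem_Icc.2 ⟨hx1, hx2⟩) (by linarith) hs
      exact hw1 s hsJ.1 hsJ.2
    have hxm : |x - a₁| ≤ 10 := by
      rw [abs_le]
      constructor <;> [linarith [ha₁mem.2]; linarith [ha₁mem.1]]
    have h10 : (δ^(1/r)/4 + 2000 * δ^((1:ℝ)/3)) * |x - a₁|
        ≤ (δ^(1/r)/4 + 2000 * δ^((1:ℝ)/3)) * 10 :=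
      mul_le_mul_of_nonneg_left hxm (by positivity)
    have htri : |v0 x| ≤ |v0 a₁| + |v0 x - v0 a₁| := by
      calc |v0 x| = |v0 a₁ + (v0 x - v0 a₁)| := by ring_nf
        _ ≤ |v0 a₁| + |v0 x - v0 a₁| := abs_add_le _ _
    nlinarith
  -- pointwise bound on |v4| on the block
  set W : ℝ := ((7/2) * δ^(1/r) + 20000 * δ^((1:ℝ)/3))^(r-1) with hW
  have hw4 : ∀ x, c-5 ≤ x → x ≤ c+5 → |v4 x| ≤ 66 * ε + W := by
    intro x hx1 hx2
    rw [heq x]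
    have h0 : -(ε * v2 x) - |v0 x| ^ (r - 2) * v0 x = -(ε * v2 x + |v0 x| ^ (r - 2) * v0 x) := by
      ring
    rw [h0, abs_neg]
    have h1 := abs_add_le (ε * v2 x) (|v0 x| ^ (r - 2) * v0 x)
    have h2 : |(|v0 x| ^ (r - 2) * v0 x)| = |v0 x| ^ (r - 1) := by
      rw [abs_mul, abs_of_nonneg (Real.rpow_nonneg (abs_nonneg _) _), nl_id2 hr]
    have h3 : |v0 x| ^ (r-1) ≤ W := by
      rw [hW]
      exact Real.rpow_le_rpow (abs_nonneg _) (hw0 x hx1 hx2) (by linarith)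
    have h4 : |ε * v2 x| ≤ 66 * ε := by
      rw [abs_mul, abs_of_pos hε0]
      calc ε * |v2 x| ≤ ε * 66 :=
            mul_le_mul_of_nonneg_left (bound_v2 hr hε0 hε1 d0 d1 d2 d3 hb heq x) hε0.le
        _ = 66 * ε := by ring
    linarith
  -- slope point for v3
  have hbb₁2 : b₁ ≤ c - 4 := hb₁mem.2
  have hbb₂1 : c + 4 ≤ b₂ := hb₂mem.1
  obtain ⟨m₃, hm₃mem, hm₃⟩ := exists_hasDerivAt_eq_slope v2 v3 (by linarith : b₁ < b₂)
    (cont_v2 d2).continuousOn (fun x _ => d2 x)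
  have hm₃J : m₃ ∈ Set.Icc (c-5) (c+5) :=
    ⟨by linarith [hm₃mem.1, hb₁mem.1], by linarith [hm₃mem.2, hb₂mem.2]⟩
  have hv3m : |v3 m₃| ≤ δ^((1:ℝ)/2)/4 := by
    rw [hm₃, abs_div]
    have hnum : |v2 b₂ - v2 b₁| ≤ 2 * δ^((1:ℝ)/2) := by
      calc |v2 b₂ - v2 b₁| ≤ |v2 b₂| + |v2 b₁| := abs_sub _ _
        _ ≤ 2 * δ^((1:ℝ)/2) := by linarith
    have hden : |b₂ - b₁| = b₂ - b₁ := abs_of_pos (by linarith)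
    rw [hden]
    calc |v2 b₂ - v2 b₁| / (b₂ - b₁) ≤ 2 * δ^((1:ℝ)/2) / 8 :=
          div_le_div₀ (by positivity) hnum (by norm_num) (by linarith)
      _ = δ^((1:ℝ)/2)/4 := by ring
  -- bound |v3 c|
  have hv3c : |v3 c| ≤ δ^((1:ℝ)/2)/4 + 660 * ε + 10 * W := by
    have hprop : |v3 c - v3 m₃| ≤ (66 * ε + W) * |c - m₃| := by
      apply ftc_bound d3 (cont_v4 hr d0 d2 heq)
      intro s hs
      have hsJ := uIcc_subset_Icc' (Set.mem_Icc.2 ⟨hm₃J.1, hm₃J.2⟩)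
        (Set.mem_Icc.2 ⟨by linarith, by linarith⟩) (by linarith) hs
      exact hw4 s hsJ.1 hsJ.2
    have hxm : |c - m₃| ≤ 10 := by
      rw [abs_le]
      constructor <;> [linarith [hm₃J.2]; linarith [hm₃J.1]]
    have hW0 : 0 ≤ W := by
      rw [hW]
      exact Real.rpow_nonneg (by positivity) _
    have h10 : (66 * ε + W) * |c - m₃| ≤ (66 * ε + W) * 10 := by
      apply mul_le_mul_of_nonneg_left hxm
      positivity
    have htri : |v3 c| ≤ |v3 m₃| + |v3 c - v3 m₃| := by
      calc |v3 c| = |v3 m₃ + (v3 c - v3 m₃)| := by ring_nf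
        _ ≤ |v3 m₃| + |v3 c - v3 m₃| := abs_add_le _ _
    nlinarith
  -- conclude
  have h1 : |FF ε v0 v1 v2 v3 c| ≤ |v3 c * v0 c| + |v2 c * v1 c| + |ε * (v0 c * v1 c)| := by
    unfold FF
    calc |v3 c * v0 c - v2 c * v1 c + ε * (v0 c * v1 c)|
        ≤ |v3 c * v0 c - v2 c * v1 c| + |ε * (v0 c * v1 c)| := abs_add_le _ _
      _ ≤ |v3 c * v0 c| + |v2 c * v1 c| + |ε * (v0 c * v1 c)| := by
          linarith [abs_sub (v3 c * v0 c) (v2 c * v1 c)]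
  have h2 : |v3 c * v0 c| ≤ δ^((1:ℝ)/2)/4 + 660 * ε + 10 * W := by
    rw [abs_mul]
    have hW0 : 0 ≤ W := by
      rw [hW]
      exact Real.rpow_nonneg (by positivity) _
    calc |v3 c| * |v0 c| ≤ (δ^((1:ℝ)/2)/4 + 660 * ε + 10 * W) * 1 := by
          apply mul_le_mul hv3c (hb c) (abs_nonneg _) (by positivity)
      _ = δ^((1:ℝ)/2)/4 + 660 * ε + 10 * W := by ring
  have h3 : |v2 c * v1 c| ≤ 200 * δ^((1:ℝ)/3) * 68 := by
    rw [abs_mul]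
    apply mul_le_mul (hw2 c (by linarith) (by linarith))
      (bound_v1 hr hε0 hε1 d0 d1 d2 d3 hb heq c) (abs_nonneg _) (by positivity)
  have h4 : |ε * (v0 c * v1 c)| ≤ 68 * ε := by
    rw [abs_mul, abs_mul, abs_of_pos hε0]
    calc ε * (|v0 c| * |v1 c|) ≤ ε * (1 * 68) := by
          apply mul_le_mul_of_nonneg_left _ hε0.le
          apply mul_le_mul (hb c) (bound_v1 hr hε0 hε1 d0 d1 d2 d3 hb heq c)
            (abs_nonneg _) (by norm_num)
      _ = 68 * ε := by ring
  rw [hW] at *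
  linarith


lemma int_v1_le (a b : ℝ) (hab : a ≤ b) : ∫ x in a..b, (v1 x)^2 ≤ 4624 * (b - a) := by
  have h2 : ∫ x in a..b, (v1 x)^2 ≤ ∫ _x in a..b, (4624:ℝ) := by
    apply intervalIntegral.integral_mono_on hab (((cont_v1 d1).pow 2).intervalIntegrable a b)
      intervalIntegrable_const
    intro x _
    simp only [Pi.pow_apply]
    nlinarith [sq_abs (v1 x), bound_v1 hr hε0 hε1 d0 d1 d2 d3 hb heq x, abs_nonneg (v1 x)]
  rw [intervalIntegral.integral_const, smul_eq_mul] at h2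
  linarith

lemma hump (h0 : 1/2 ≤ |v0 0|) (y₁ y₂ : ℝ) (h1 : y₁ ≤ -(1/272)) (h2 : (1/272:ℝ) ≤ y₂) :
    (1/136) * (1/4:ℝ)^r ≤ ∫ x in y₁..y₂, (|v0 x| ^ r + (v2 x)^2) := by
  have cg : Continuous (fun x => |v0 x| ^ r + (v2 x)^2) :=
    cont_g hr hε0 hε1 d0 d1 d2 d3 hb heq
  have c0r : Continuous (fun x => |v0 x| ^ r) := cont_rpow_r hr hε0 hε1 d0 d1 d2 d3 hb heq
  have hlow : ∀ x ∈ Set.Icc (-(1/272):ℝ) (1/272), (1/4:ℝ)^r ≤ |v0 x| ^ r := by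
    intro x hx
    have hd : |v0 x - v0 0| ≤ 68 * |x - 0| :=
      ftc_bound d0 (cont_v1 d1) 0 x (fun s _ => bound_v1 hr hε0 hε1 d0 d1 d2 d3 hb heq s)
    have hxa : |x| ≤ 1/272 := abs_le.2 ⟨hx.1, hx.2⟩
    rw [sub_zero] at hd
    have hx68 : 68 * |x| ≤ 1/4 := by linarith
    have htri : |v0 0| ≤ |v0 x| + |v0 x - v0 0| := by
      calc |v0 0| = |v0 x - (v0 x - v0 0)| := by ring_nf
        _ ≤ |v0 x| + |v0 x - v0 0| := abs_sub _ _
    have hge : (1/4:ℝ) ≤ |v0 x| := by linarith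
    exact Real.rpow_le_rpow (by norm_num) hge (by linarith)
  have s1 : ∫ _x in (-(1/272):ℝ)..(1/272), ((1/4:ℝ)^r)
      ≤ ∫ x in (-(1/272):ℝ)..(1/272), |v0 x| ^ r := by
    apply intervalIntegral.integral_mono_on (by norm_num) intervalIntegrable_const
      (c0r.intervalIntegrable _ _) hlow
  have s2 : ∫ x in (-(1/272):ℝ)..(1/272), |v0 x| ^ r
      ≤ ∫ x in (-(1/272):ℝ)..(1/272), (|v0 x| ^ r + (v2 x)^2) := by
    apply intervalIntegral.integral_mono_on (by norm_num) (c0r.intervalIntegrable _ _)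
      (cg.intervalIntegrable _ _)
    intro x _
    nlinarith [sq_nonneg (v2 x)]
  have s3 : ∫ x in (-(1/272):ℝ)..(1/272), (|v0 x| ^ r + (v2 x)^2)
      ≤ ∫ x in y₁..y₂, (|v0 x| ^ r + (v2 x)^2) := by
    apply intervalIntegral.integral_mono_interval h1 (by norm_num) h2
      (MeasureTheory.ae_of_all _ (fun x => ?_)) (cg.intervalIntegrable _ _)
    simp only [Pi.zero_apply]
    positivity
  have s0 : ∫ _x in (-(1/272):ℝ)..(1/272), ((1/4:ℝ)^r) = (1/136) * (1/4:ℝ)^r := by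
    rw [intervalIntegral.integral_const, smul_eq_mul]
    norm_num
  linarith

end Scaled2

lemma tendsto_rpow_nhdsWithin (a : ℝ) (ha : 0 < a) :
    Tendsto (fun x : ℝ => x ^ a) (nhdsWithin (0:ℝ) (Set.Ioi 0)) (nhds 0) := by
  have h := (Real.continuousAt_rpow_const 0 a (Or.inr ha.le)).continuousWithinAt
    (s := Set.Ioi 0)
  unfold ContinuousWithinAt at h
  simpa [Real.zero_rpow ha.ne'] using h

set_option maxHeartbeats 1000000 in
lemma key {r : ℝ} (hr : 2 < r) :
    ∃ ε₀ : ℝ, 0 < ε₀ ∧ ε₀ ≤ 1 ∧ ∀ (ε : ℝ) (v0 v1 v2 v3 v4 : ℝ → ℝ),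
      0 < ε → ε ≤ ε₀ →
      (∀ x, HasDerivAt v0 (v1 x) x) → (∀ x, HasDerivAt v1 (v2 x) x) →
      (∀ x, HasDerivAt v2 (v3 x) x) → (∀ x, HasDerivAt v3 (v4 x) x) →
      (∀ x, |v0 x| ≤ 1) →
      (∀ x, v4 x = -(ε * v2 x) - |v0 x| ^ (r - 2) * v0 x) →
      1/2 ≤ |v0 0| → False := by
  have hr0 : (0:ℝ) < r := by linarith
  set c₀ : ℝ := (1/136) * (1/4:ℝ)^r with hc₀
  have hc₀0 : 0 < c₀ := by
    have h1 := Real.rpow_pos_of_pos (by norm_num : (0:ℝ) < 1/4) r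
    rw [hc₀]
    positivity
  have hΦ : Tendsto (fun δ : ℝ => δ^((1:ℝ)/2)/4 + 13600*δ^((1:ℝ)/3)
      + 10*((7/2)*δ^(1/r) + 20000*δ^((1:ℝ)/3))^(r-1))
      (nhdsWithin (0:ℝ) (Set.Ioi 0)) (nhds 0) := by
    have t2 := tendsto_rpow_nhdsWithin ((1:ℝ)/2) (by norm_num)
    have t3 := tendsto_rpow_nhdsWithin ((1:ℝ)/3) (by norm_num)
    have tr := tendsto_rpow_nhdsWithin (1/r) (by positivity)
    have tinner : Tendsto (fun δ : ℝ => (7/2)*δ^(1/r) + 20000*δ^((1:ℝ)/3))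
        (nhdsWithin (0:ℝ) (Set.Ioi 0)) (nhds 0) := by
      have h := (tr.const_mul (7/2:ℝ)).add (t3.const_mul (20000:ℝ))
      simpa using h
    have touter : Tendsto (fun δ : ℝ => ((7/2)*δ^(1/r) + 20000*δ^((1:ℝ)/3))^(r-1))
        (nhdsWithin (0:ℝ) (Set.Ioi 0)) (nhds 0) := by
      have h := tinner.rpow_const (p := r - 1) (Or.inr (by linarith))
      rwa [Real.zero_rpow (by linarith : r - 1 ≠ 0)] at h
    have h := ((t2.div_const 4).add (t3.const_mul (13600:ℝ))).add (touter.const_mul 10)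
    simpa using h
  obtain ⟨δ, hδΦ, hδ1, hδ0⟩ : ∃ δ : ℝ, (δ^((1:ℝ)/2)/4 + 13600*δ^((1:ℝ)/3)
      + 10*((7/2)*δ^(1/r) + 20000*δ^((1:ℝ)/3))^(r-1)) < c₀/4 ∧ δ < 1 ∧ 0 < δ := by
    have hev := (hΦ.eventually_lt_const (by positivity : (0:ℝ) < c₀/4)).and
      (((eventually_lt_nhds one_pos).filter_mono nhdsWithin_le_nhds).and
        eventually_mem_nhdsWithin)
    obtain ⟨δ, h1, h2, h3⟩ := hev.exists
    exact ⟨δ, h1, h2, h3⟩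
  obtain ⟨N, hNge⟩ := exists_nat_ge (max 2 (19000/δ))
  have hN2 : (2:ℝ) ≤ (N:ℝ) := le_trans (le_max_left _ _) hNge
  have hNδ : 19000/δ ≤ (N:ℝ) := le_trans (le_max_right _ _) hNge
  have hN0 : (0:ℝ) < (N:ℝ) := by linarith
  have h10N : (0:ℝ) < 10*(N:ℝ) := by linarith
  have hD : (0:ℝ) < 2*(184960*(N:ℝ) + 1456) := by linarith
  refine ⟨min (1/(10*(N:ℝ))) (c₀/(2*(184960*(N:ℝ) + 1456))), lt_min (by positivity)
    (by positivity), ?_, ?_⟩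
  · refine le_trans (min_le_left _ _) ?_
    rw [div_le_one h10N]
    linarith
  intro ε v0 v1 v2 v3 v4 hεpos hεle d0 d1 d2 d3 hb heq h0
  have hεN : ε * (10*(N:ℝ)) ≤ 1 := by
    have h1 := le_trans hεle (min_le_left _ _)
    rw [le_div_iff₀ h10N] at h1
    linarith
  have hεD : ε * (2*(184960*(N:ℝ) + 1456)) ≤ c₀ := by
    have h1 := le_trans hεle (min_le_right _ _)
    rw [le_div_iff₀ hD] at h1
    linarith
  have h20 : ε*20 ≤ ε*(10*(N:ℝ)) := mul_le_mul_of_nonneg_left (by linarith) hεpos.le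
  have hε1 : ε ≤ 1 := by linarith
  have cg : Continuous (fun x => |v0 x| ^ r + (v2 x)^2) :=
    cont_g hr hεpos hε1 d0 d1 d2 d3 hb heq
  -- left block
  set aL : ℕ → ℝ := fun k => -(20*(N:ℝ)) + 10*(k:ℝ) with haL
  have hsumL := intervalIntegral.sum_integral_adjacent_intervals
    (μ := MeasureTheory.volume) (a := aL) (n := N)
    (f := fun x => |v0 x| ^ r + (v2 x)^2) (fun k _ => cg.intervalIntegrable _ _)
  have haL0 : aL 0 = -(20*(N:ℝ)) := by simp [haL]
  have haLN : aL N = -(10*(N:ℝ)) := by rw [haL]; push_cast; ring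
  have htotL : ∫ x in (-(20*(N:ℝ)))..(-(10*(N:ℝ))), (|v0 x| ^ r + (v2 x)^2) ≤ 14224 := by
    have h1 := int_g_le hr hεpos hε1 d0 d1 d2 d3 hb heq (-(20*(N:ℝ))) (-(10*(N:ℝ)))
      (by linarith)
    have he : 4624*(ε*((-(10*(N:ℝ))) - (-(20*(N:ℝ))))) = 462.4*(ε*(10*(N:ℝ))) * 10 := by ring
    nlinarith [hεN]
  have hexL : ∃ k, k < N ∧ (∫ x in aL k..aL (k+1), (|v0 x| ^ r + (v2 x)^2)) ≤ δ := by
    by_contra hcon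
    push_neg at hcon
    have h4 : ∑ _k ∈ Finset.range N, δ
        < ∑ k ∈ Finset.range N, ∫ x in aL k..aL (k+1), (|v0 x| ^ r + (v2 x)^2) :=
      Finset.sum_lt_sum_of_nonempty (Finset.nonempty_range_iff.2 (by intro h; rw [h] at hN2; norm_num at hN2))
        (fun k hk => hcon k (Finset.mem_range.1 hk))
    rw [Finset.sum_const, Finset.card_range, nsmul_eq_mul, hsumL, haL0, haLN] at h4
    have h5 : 19000 ≤ (N:ℝ)*δ := by
      have h6 := (div_le_iff₀ hδ0).1 hNδ
      linarith
    linarith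
  obtain ⟨k₁, hk₁N, hk₁int⟩ := hexL
  have hk₁r : (k₁:ℝ) + 1 ≤ (N:ℝ) := by exact_mod_cast hk₁N
  set yL : ℝ := aL k₁ + 5 with hyL
  have hblL : |FF ε v0 v1 v2 v3 yL| ≤ δ^((1:ℝ)/2)/4 + 13600*δ^((1:ℝ)/3)
      + 10*((7/2)*δ^(1/r) + 20000*δ^((1:ℝ)/3))^(r-1) + 728*ε := by
    refine block hr hεpos hε1 d0 d1 d2 d3 hb heq yL δ hδ0 hδ1.le ?_
    have he1 : yL - 5 = aL k₁ := by rw [hyL]; ring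
    have he2 : yL + 5 = aL (k₁+1) := by rw [hyL, haL]; push_cast; ring
    rw [he1, he2]
    exact hk₁int
  have hyLle : yL ≤ -(1/272) := by
    have : yL = -(20*(N:ℝ)) + 10*(k₁:ℝ) + 5 := by rw [hyL, haL]
    rw [this]
    linarith [hk₁r, hN2]
  have hyLge : -(20*(N:ℝ)) ≤ yL := by
    have he : yL = -(20*(N:ℝ)) + 10*(k₁:ℝ) + 5 := by rw [hyL, haL]
    have hk0 : (0:ℝ) ≤ (k₁:ℝ) := Nat.cast_nonneg _
    rw [he]
    linarith
  -- right block
  set aR : ℕ → ℝ := fun k => 10*(N:ℝ) + 10*(k:ℝ) with haR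
  have hsumR := intervalIntegral.sum_integral_adjacent_intervals
    (μ := MeasureTheory.volume) (a := aR) (n := N)
    (f := fun x => |v0 x| ^ r + (v2 x)^2) (fun k _ => cg.intervalIntegrable _ _)
  have haR0 : aR 0 = 10*(N:ℝ) := by simp [haR]
  have haRN : aR N = 20*(N:ℝ) := by rw [haR]; push_cast; ring
  have htotR : ∫ x in (10*(N:ℝ))..(20*(N:ℝ)), (|v0 x| ^ r + (v2 x)^2) ≤ 14224 := by
    have h1 := int_g_le hr hεpos hε1 d0 d1 d2 d3 hb heq (10*(N:ℝ)) (20*(N:ℝ))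
      (by linarith)
    have he : 4624*(ε*((20*(N:ℝ)) - (10*(N:ℝ)))) = 462.4*(ε*(10*(N:ℝ))) * 10 := by ring
    nlinarith [hεN]
  have hexR : ∃ k, k < N ∧ (∫ x in aR k..aR (k+1), (|v0 x| ^ r + (v2 x)^2)) ≤ δ := by
    by_contra hcon
    push_neg at hcon
    have h4 : ∑ _k ∈ Finset.range N, δ
        < ∑ k ∈ Finset.range N, ∫ x in aR k..aR (k+1), (|v0 x| ^ r + (v2 x)^2) :=
      Finset.sum_lt_sum_of_nonempty (Finset.nonempty_range_iff.2 (by intro h; rw [h] at hN2; norm_num at hN2))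
        (fun k hk => hcon k (Finset.mem_range.1 hk))
    rw [Finset.sum_const, Finset.card_range, nsmul_eq_mul, hsumR, haR0, haRN] at h4
    have h5 : 19000 ≤ (N:ℝ)*δ := by
      have h6 := (div_le_iff₀ hδ0).1 hNδ
      linarith
    linarith
  obtain ⟨k₂, hk₂N, hk₂int⟩ := hexR
  have hk₂r : (k₂:ℝ) + 1 ≤ (N:ℝ) := by exact_mod_cast hk₂N
  set yR : ℝ := aR k₂ + 5 with hyR
  have hblR : |FF ε v0 v1 v2 v3 yR| ≤ δ^((1:ℝ)/2)/4 + 13600*δ^((1:ℝ)/3)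
      + 10*((7/2)*δ^(1/r) + 20000*δ^((1:ℝ)/3))^(r-1) + 728*ε := by
    refine block hr hεpos hε1 d0 d1 d2 d3 hb heq yR δ hδ0 hδ1.le ?_
    have he1 : yR - 5 = aR k₂ := by rw [hyR]; ring
    have he2 : yR + 5 = aR (k₂+1) := by rw [hyR, haR]; push_cast; ring
    rw [he1, he2]
    exact hk₂int
  have hk₂0 : (0:ℝ) ≤ (k₂:ℝ) := Nat.cast_nonneg _
  have hyRge : (1/272:ℝ) ≤ yR := by
    have he : yR = 10*(N:ℝ) + 10*(k₂:ℝ) + 5 := by rw [hyR, haR]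
    rw [he]
    linarith [hk₂0, hN2]
  have hyRle : yR ≤ 20*(N:ℝ) := by
    have he : yR = 10*(N:ℝ) + 10*(k₂:ℝ) + 5 := by rw [hyR, haR]
    rw [he]
    linarith [hk₂r]
  -- final assembly
  have hyy : yL ≤ yR := by linarith
  have hid := int_identity hr hεpos hε1 d0 d1 d2 d3 hb heq yL yR
  have hhump := hump hr hεpos hε1 d0 d1 d2 d3 hb heq h0 yL yR hyLle hyRge
  have hv1 := int_v1_le hr hεpos hε1 d0 d1 d2 d3 hb heq yL yR hyy
  have hεv1 : ε * (∫ x in yL..yR, (v1 x)^2) ≤ 184960*(ε*(N:ℝ)) := by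
    calc ε * (∫ x in yL..yR, (v1 x)^2) ≤ ε * (4624*(yR - yL)) :=
          mul_le_mul_of_nonneg_left hv1 hεpos.le
      _ ≤ ε * (4624*(40*(N:ℝ))) := by
          apply mul_le_mul_of_nonneg_left _ hεpos.le
          linarith
      _ = 184960*(ε*(N:ℝ)) := by ring
  rw [abs_le] at hblL hblR
  have hc : c₀ ≤ ∫ x in yL..yR, (|v0 x| ^ r + (v2 x)^2) := hhump
  rw [hid] at hc
  have hεD' : 184960*(ε*(N:ℝ)) + 1456*ε ≤ c₀/2 := by
    have hh : ε * (2*(184960*(N:ℝ) + 1456)) = 2*(184960*(ε*(N:ℝ)) + 1456*ε) := by ring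
    linarith [hεD]
  linarith [hblL.1, hblL.2, hblR.1, hblR.2, hδΦ]

lemma hasDerivAt_scale {f g : ℝ → ℝ} (hf : ∀ z, HasDerivAt f (g z) z) (x₀ lam S x : ℝ) :
    HasDerivAt (fun y => f (x₀ + lam * y) / S) (lam * g (x₀ + lam * x) / S) x := by
  have hin : HasDerivAt (fun y : ℝ => x₀ + lam * y) lam x := by
    simpa using ((hasDerivAt_id x).const_mul lam).const_add x₀
  have h2 := ((hf (x₀ + lam * x)).comp x hin).div_const S
  exact h2.congr_deriv (by ring)

set_option maxHeartbeats 1000000 in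
/-- Let `r > 2`. If `(qₙ)` are positive reals with `qₙ → 0` and each `uₙ` is a
bounded `C⁴` solution of `uₙ'''' + qₙ uₙ'' + |uₙ|^(r−2) uₙ = 0` on `ℝ`, then
`sup_{x∈ℝ} |uₙ(x)| → 0`. -/
theorem stmt6 (r : ℝ) (hr : 2 < r)
    (q : ℕ → ℝ) (hqpos : ∀ n, 0 < q n)
    (hq0 : Filter.Tendsto q Filter.atTop (nhds 0))
    (u : ℕ → ℝ → ℝ) (hu : ∀ n, ContDiff ℝ 4 (u n))
    (hbdd : ∀ n, ∃ M : ℝ, ∀ x : ℝ, |u n x| ≤ M)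
    (hsol : ∀ n, ∀ x : ℝ,
      iteratedDeriv 4 (u n) x + q n * iteratedDeriv 2 (u n) x
        + |u n x| ^ (r - 2) * u n x = 0) :
    Filter.Tendsto (fun n => ⨆ x : ℝ, |u n x|) Filter.atTop (nhds 0) := by
  rw [Metric.tendsto_atTop]
  intro η hη
  obtain ⟨ε₀, hε₀0, hε₀1, hkey⟩ := key hr
  have hc : (0:ℝ) < ε₀ * η ^ ((r-2)/2) := by positivity
  have hev := hq0.eventually_lt_const hc
  rw [eventually_atTop] at hev
  obtain ⟨n₀, hn₀⟩ := hev
  refine ⟨n₀, fun n hn => ?_⟩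
  obtain ⟨M, hM⟩ := hbdd n
  have hBdd : BddAbove (Set.range fun x => |u n x|) :=
    ⟨M, by rintro y ⟨x, rfl⟩; exact hM x⟩
  have hSnn : (0:ℝ) ≤ ⨆ x : ℝ, |u n x| :=
    le_trans (abs_nonneg (u n 0)) (le_ciSup hBdd 0)
  rw [Real.dist_eq, sub_zero, abs_of_nonneg hSnn]
  by_contra hcon
  push_neg at hcon
  set S : ℝ := ⨆ x : ℝ, |u n x| with hS
  have hS0 : 0 < S := lt_of_lt_of_le hη hcon
  have hSne : S ≠ 0 := hS0.ne'
  have hSub : ∀ x, |u n x| ≤ S := fun x => le_ciSup hBdd x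
  obtain ⟨x₀, hx₀⟩ : ∃ x₀, S/2 < |u n x₀| :=
    exists_lt_of_lt_ciSup (show S/2 < ⨆ x : ℝ, |u n x| by rw [← hS]; linarith)
  have hD : ∀ k : ℕ, k < 4 → ∀ x : ℝ, HasDerivAt (iteratedDeriv k (u n))
      (iteratedDeriv (k+1) (u n) x) x := by
    intro k hk x
    have hdiff : Differentiable ℝ (iteratedDeriv k (u n)) :=
      (hu n).differentiable_iteratedDeriv k (by exact_mod_cast hk)
    have h := (hdiff x).hasDerivAt
    rw [iteratedDeriv_succ]
    exact h
  set lam : ℝ := S ^ ((2-r)/4) with hlam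
  have hlam0 : 0 < lam := Real.rpow_pos_of_pos hS0 _
  set v0 : ℝ → ℝ := fun x => u n (x₀ + lam * x) / S with hv0
  set v1 : ℝ → ℝ := fun x => lam * iteratedDeriv 1 (u n) (x₀ + lam * x) / S with hv1
  set v2 : ℝ → ℝ := fun x => lam * (lam * iteratedDeriv 2 (u n) (x₀ + lam * x)) / S with hv2
  set v3 : ℝ → ℝ :=
    fun x => lam * (lam * (lam * iteratedDeriv 3 (u n) (x₀ + lam * x))) / S with hv3
  set v4 : ℝ → ℝ :=
    fun x => lam * (lam * (lam * (lam * iteratedDeriv 4 (u n) (x₀ + lam * x)))) / S with hv4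
  have hd0 : ∀ x, HasDerivAt v0 (v1 x) x := by
    intro x
    rw [hv0, hv1]
    exact hasDerivAt_scale (f := u n) (g := fun z => iteratedDeriv 1 (u n) z)
      (fun z => by simpa [iteratedDeriv_zero] using hD 0 (by norm_num) z) x₀ lam S x
  have hd1 : ∀ x, HasDerivAt v1 (v2 x) x := by
    intro x
    rw [hv1, hv2]
    exact hasDerivAt_scale (f := fun w => lam * iteratedDeriv 1 (u n) w)
      (g := fun w => lam * iteratedDeriv 2 (u n) w)
      (fun z => (hD 1 (by norm_num) z).const_mul lam) x₀ lam S x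
  have hd2 : ∀ x, HasDerivAt v2 (v3 x) x := by
    intro x
    rw [hv2, hv3]
    exact hasDerivAt_scale (f := fun w => lam * (lam * iteratedDeriv 2 (u n) w))
      (g := fun w => lam * (lam * iteratedDeriv 3 (u n) w))
      (fun z => ((hD 2 (by norm_num) z).const_mul lam).const_mul lam) x₀ lam S x
  have hd3 : ∀ x, HasDerivAt v3 (v4 x) x := by
    intro x
    rw [hv3, hv4]
    exact hasDerivAt_scale (f := fun w => lam * (lam * (lam * iteratedDeriv 3 (u n) w)))
      (g := fun w => lam * (lam * (lam * iteratedDeriv 4 (u n) w)))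
      (fun z => (((hD 3 (by norm_num) z).const_mul lam).const_mul lam).const_mul lam)
      x₀ lam S x
  have hb' : ∀ x, |v0 x| ≤ 1 := by
    intro x
    rw [hv0]
    simp only []
    rw [abs_div, abs_of_pos hS0, div_le_one hS0]
    exact hSub _
  have h0' : 1/2 ≤ |v0 0| := by
    rw [hv0]
    simp only [mul_zero, add_zero]
    rw [abs_div, abs_of_pos hS0, le_div_iff₀ hS0]
    linarith
  have hrpowS : (0:ℝ) < S^(r-2) := Real.rpow_pos_of_pos hS0 _
  have hinv : lam*lam*lam*lam = (S^(r-2))⁻¹ := by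
    have h1 : lam*lam*lam*lam = lam^(4:ℕ) := by ring
    rw [h1, hlam, ← Real.rpow_natCast (S ^ ((2-r)/4)) 4, ← Real.rpow_mul hS0.le]
    rw [show (2-r)/4 * ((4:ℕ):ℝ) = -(r-2) by push_cast; ring]
    rw [Real.rpow_neg hS0.le]
  have heq' : ∀ x, v4 x = -(q n * lam^2 * v2 x) - |v0 x| ^ (r - 2) * v0 x := by
    intro x
    rw [hv4, hv2, hv0]
    simp only []
    have h4 : iteratedDeriv 4 (u n) (x₀ + lam * x)
        = -(q n * iteratedDeriv 2 (u n) (x₀ + lam * x))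
          - |u n (x₀ + lam * x)| ^ (r-2) * u n (x₀ + lam * x) := by
      linarith [hsol n (x₀ + lam * x)]
    rw [h4]
    have habs : |u n (x₀ + lam * x) / S| ^ (r-2) = |u n (x₀ + lam * x)| ^ (r-2) / S^(r-2) := by
      rw [abs_div, abs_of_pos hS0, Real.div_rpow (abs_nonneg _) hS0.le]
    rw [habs]
    rw [show lam * (lam * (lam * (lam * (-(q n * iteratedDeriv 2 (u n) (x₀ + lam * x))
          - |u n (x₀ + lam * x)| ^ (r-2) * u n (x₀ + lam * x))))) / S
        = -(q n * lam^2 * (lam * (lam * iteratedDeriv 2 (u n) (x₀ + lam * x)) / S))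
          - (lam*lam*lam*lam) * (|u n (x₀ + lam * x)| ^ (r-2) * u n (x₀ + lam * x)) / S
      by ring]
    rw [hinv]
    ring
  have hεpos : 0 < q n * lam^2 := mul_pos (hqpos n) (pow_pos hlam0 2)
  have hεle : q n * lam^2 ≤ ε₀ := by
    have hlam2 : lam^(2:ℕ) = S^((2-r)/2) := by
      rw [hlam, ← Real.rpow_natCast (S ^ ((2-r)/4)) 2, ← Real.rpow_mul hS0.le]
      rw [show (2-r)/4 * ((2:ℕ):ℝ) = (2-r)/2 by push_cast; ring]
    have hmono : S^((2-r)/2) ≤ η^((2-r)/2) :=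
      Real.rpow_le_rpow_of_nonpos hη hcon (by linarith)
    have hq : q n < ε₀ * η^((r-2)/2) := hn₀ n hn
    have hηprod : η^((r-2)/2) * η^((2-r)/2) = 1 := by
      rw [← Real.rpow_add hη, show (r-2)/2 + (2-r)/2 = (0:ℝ) by ring, Real.rpow_zero]
    calc q n * lam^2 = q n * S^((2-r)/2) := by rw [hlam2]
      _ ≤ q n * η^((2-r)/2) := mul_le_mul_of_nonneg_left hmono (hqpos n).le
      _ ≤ (ε₀ * η^((r-2)/2)) * η^((2-r)/2) :=
          mul_le_mul_of_nonneg_right hq.le (Real.rpow_nonneg hη.le _)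
      _ = ε₀ * (η^((r-2)/2) * η^((2-r)/2)) := by ring
      _ = ε₀ := by rw [hηprod, mul_one]
  exact hkey (q n * lam^2) v0 v1 v2 v3 v4 hεpos hεle hd0 hd1 hd2 hd3 hb' heq' h0'
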